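/- For all k ∈ ℝ^d \ {0} and λ > 0, and for ψ : ℝ^d → ℝ bounded with compact support, ∫_{ℝ^d} ψ(ξ)² / (1 + (ξ·k)²/λ²) dξ ≤ ‖ψ‖_∞² C_ψ min(1, π λ/|k|), where C_ψ depends only on the support of ψ (one may take C_ψ to be the (d-1)-dimensional measure of the projection of supp ψ times its diameter). -/

import Mathlib

open MeasureTheory Real

private lemma aux_int_one_add_sq {a : ℝ} (ha : a ≠ 0) :
    Integrable fun t : ℝ => (1 + (a * t) ^ 2)⁻¹ :=
  integrable_inv_one_add_sq.comp_mul_left' ha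

private lemma aux_val_one_add_sq {a : ℝ} (ha : 0 < a) :
    (∫ t : ℝ, (1 + (a * t) ^ 2)⁻¹) = π / a := by
  have h := MeasureTheory.Measure.integral_comp_mul_left (fun y : ℝ => (1 + y ^ 2)⁻¹) a
  rw [h, integral_univ_inv_one_add_sq, abs_of_pos (inv_pos.2 ha), smul_eq_mul, inv_mul_eq_div]

private lemma aux_abs_coord_le_norm {ι : Type*} [Fintype ι] (x : EuclideanSpace ℝ ι) (i : ι) :
    |x i| ≤ ‖x‖ := by
  rw [EuclideanSpace.norm_eq, ← Real.sqrt_sq_eq_abs]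
  refine Real.sqrt_le_sqrt ?_
  have h : ∀ j ∈ Finset.univ, (0:ℝ) ≤ ‖x j‖ ^ 2 := fun j _ => sq_nonneg _
  simpa [Real.norm_eq_abs, sq_abs] using Finset.single_le_sum h (Finset.mem_univ i)

theorem stmt_7 (d : ℕ) (ψ : EuclideanSpace ℝ (Fin d) → ℝ)
    (hψm : Measurable ψ) (hψc : HasCompactSupport ψ)
    (hψb : ∃ Bd, ∀ ξ, |ψ ξ| ≤ Bd) :
    ∃ C : ℝ, 0 ≤ C ∧ ∀ (k : EuclideanSpace ℝ (Fin d)), k ≠ 0 → ∀ l : ℝ, 0 < l →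
      (∫ ξ : EuclideanSpace ℝ (Fin d), ψ ξ ^ 2 / (1 + (inner ℝ ξ k : ℝ) ^ 2 / l ^ 2)) ≤
        (⨆ ξ, |ψ ξ|) ^ 2 * C * min 1 (Real.pi * l / ‖k‖) := by
  obtain ⟨B, hB⟩ := hψb
  have hbdd : BddAbove (Set.range fun ξ => |ψ ξ|) := ⟨B, by rintro _ ⟨ξ, rfl⟩; exact hB ξ⟩
  set M := ⨆ ξ, |ψ ξ| with hMdef
  have hMle : ∀ ξ, |ψ ξ| ≤ M := fun ξ => le_ciSup hbdd ξ
  have hM0 : 0 ≤ M := le_trans (abs_nonneg _) (hMle 0)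
  obtain ⟨R, hR1, hRsub⟩ := hψc.isBounded.subset_closedBall_lt 1 0
  have hR0 : (0:ℝ) < R := lt_trans one_pos hR1
  rcases Nat.eq_zero_or_pos d with hd | hd
  · subst hd
    refine ⟨0, le_rfl, fun k hk l hl => ?_⟩
    have hk0 : ‖k‖ = 0 := by simp [EuclideanSpace.norm_eq]
    exact absurd (norm_eq_zero.mp hk0) hk
  obtain ⟨n, rfl⟩ : ∃ n, d = n + 1 := ⟨d - 1, (Nat.succ_pred_eq_of_pos hd).symm⟩
  refine ⟨(2*R)^n * (2*R), by positivity, fun k hk l hl => ?_⟩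
  have hknorm : (0:ℝ) < ‖k‖ := norm_pos_iff.mpr hk
  set a : ℝ := ‖k‖ / l with hadef
  have ha : 0 < a := div_pos hknorm hl
  -- orthonormal basis with first vector k/‖k‖
  set e : EuclideanSpace ℝ (Fin (n+1)) := ‖k‖⁻¹ • k with hedef
  have he : ‖e‖ = 1 := by
    rw [hedef, norm_smul, norm_inv, norm_norm, inv_mul_cancel₀ hknorm.ne']
  have hortho : Orthonormal ℝ (({0} : Set (Fin (n+1))).restrict fun _ => e) := by
    constructor
    · intro i; exact he
    · intro i j hij
      exfalso
      apply hij
      have hi := i.2; have hj := j.2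
      simp only [Set.mem_singleton_iff] at hi hj
      exact Subtype.ext (hi.trans hj.symm)
  have hcard : Module.finrank ℝ (EuclideanSpace ℝ (Fin (n+1))) = Fintype.card (Fin (n+1)) := by
    simp [finrank_euclideanSpace]
  obtain ⟨b, hb⟩ := hortho.exists_orthonormalBasis_extension_of_card_eq hcard
  have hb0 : b 0 = e := hb 0 rfl
  have hcoord : ∀ ξ : EuclideanSpace ℝ (Fin (n+1)), (inner ℝ ξ k : ℝ) = ‖k‖ * b.repr ξ 0 := by
    intro ξ
    rw [b.repr_apply_apply, hb0, hedef, real_inner_smul_left, real_inner_comm]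
    field_simp
  -- one dimensional pieces
  set g0 : ℝ → ℝ := fun t => (Set.Icc (-R) R).indicator (fun s => (1 + (a * s) ^ 2)⁻¹) t with hg0def
  set g1 : ℝ → ℝ := fun t => (Set.Icc (-R) R).indicator (fun _ => (1:ℝ)) t with hg1def
  set g : Fin (n+1) → ℝ → ℝ := Fin.cons g0 (fun _ => g1) with hgdef
  have hIa : Integrable fun t : ℝ => (1 + (a * t) ^ 2)⁻¹ := aux_int_one_add_sq ha.ne'
  have hIg0 : Integrable g0 := hIa.integrableOn.integrable_indicator measurableSet_Icc
  have hIg1 : Integrable g1 := by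
    exact (integrableOn_const measure_Icc_lt_top.ne).integrable_indicator measurableSet_Icc
  have hIg : ∀ i, Integrable (g i) := by
    intro i
    induction i using Fin.cases with
    | zero => simpa [hgdef] using hIg0
    | succ j => simpa [hgdef] using hIg1
  have hIG : Integrable fun x : Fin (n+1) → ℝ => ∏ i, g i (x i) := Integrable.fintype_prod hIg
  have hgnn : ∀ i t, 0 ≤ g i t := by
    intro i t
    induction i using Fin.cases with
    | zero => simp only [hgdef, Fin.cons_zero]; exact Set.indicator_nonneg (fun s _ => by positivity) t
    | succ j => simp only [hgdef, Fin.cons_succ]; exact Set.indicator_nonneg (fun s _ => one_pos.le) t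
  -- measure preserving transfer
  have hmp : MeasurePreserving
      (⇑((b.measurableEquiv).trans (MeasurableEquiv.toLp 2 (Fin (n+1) → ℝ)).symm)) volume volume := by
    exact (EuclideanSpace.volume_preserving_symm_measurableEquiv_toLp _).comp b.measurePreserving_measurableEquiv
  have hIGE : Integrable (fun ξ : EuclideanSpace ℝ (Fin (n+1)) => ∏ i, g i (b.repr ξ i)) := by
    exact (hmp.integrable_comp_emb (MeasurableEquiv.measurableEmbedding _)).mpr hIG
  have hEq1 : (∫ ξ : EuclideanSpace ℝ (Fin (n+1)), ∏ i, g i (b.repr ξ i))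
      = ∫ x : Fin (n+1) → ℝ, ∏ i, g i (x i) := by
    exact hmp.integral_comp' (fun x : Fin (n+1) → ℝ => ∏ i, g i (x i))
  -- pointwise bound
  have hpoint : ∀ ξ : EuclideanSpace ℝ (Fin (n+1)),
      ψ ξ ^ 2 / (1 + (inner ℝ ξ k : ℝ) ^ 2 / l ^ 2) ≤ M ^ 2 * ∏ i, g i (b.repr ξ i) := by
    intro ξ
    by_cases hξ : ξ ∈ Metric.closedBall (0 : EuclideanSpace ℝ (Fin (n+1))) R
    · have hnorm : ‖b.repr ξ‖ ≤ R := by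
        rw [b.repr.norm_map]
        simpa [Metric.mem_closedBall, dist_zero_right] using hξ
      have hmem : ∀ i, b.repr ξ i ∈ Set.Icc (-R) R := by
        intro i
        have := (aux_abs_coord_le_norm (b.repr ξ) i).trans hnorm
        exact abs_le.mp this |> fun h => ⟨h.1, h.2⟩
      have hprod : (∏ i, g i (b.repr ξ i)) = (1 + (a * b.repr ξ 0) ^ 2)⁻¹ := by
        rw [Fin.prod_univ_succ]
        have h0 : g 0 (b.repr ξ 0) = (1 + (a * b.repr ξ 0) ^ 2)⁻¹ := by
          simp only [hgdef, Fin.cons_zero, hg0def]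
          rw [Set.indicator_of_mem (hmem 0)]
        have hs : ∀ j : Fin n, g j.succ (b.repr ξ j.succ) = 1 := by
          intro j
          simp only [hgdef, Fin.cons_succ, hg1def]
          rw [Set.indicator_of_mem (hmem j.succ)]
        rw [h0]
        simp [hs]
      rw [hprod]
      have hden : 1 + (inner ℝ ξ k : ℝ) ^ 2 / l ^ 2 = 1 + (a * b.repr ξ 0) ^ 2 := by
        rw [hcoord ξ, hadef]
        field_simp
      rw [hden, div_eq_mul_inv]
      have h1 : ψ ξ ^ 2 ≤ M ^ 2 := by
        rw [← sq_abs]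
        exact pow_le_pow_left₀ (abs_nonneg _) (hMle ξ) 2
      exact mul_le_mul_of_nonneg_right h1 (inv_nonneg.2 (by positivity))
    · have hψ0 : ψ ξ = 0 := by
        by_contra h
        exact hξ (hRsub (subset_tsupport ψ h))
      rw [hψ0]
      have h2 : (0:ℝ) ≤ ∏ i, g i (b.repr ξ i) := Finset.prod_nonneg (fun i _ => hgnn i _)
      have h3 : (0:ℝ) ≤ M ^ 2 * ∏ i, g i (b.repr ξ i) := mul_nonneg (sq_nonneg M) h2
      simpa using h3
  -- one-dimensional integrals
  have hg1int : (∫ t, g1 t) = 2 * R := by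
    rw [hg1def, MeasureTheory.integral_indicator_const (1:ℝ) measurableSet_Icc, Real.volume_real_Icc,
      smul_eq_mul, mul_one, max_eq_left (by linarith)]
    ring
  have hg0le1 : (∫ t, g0 t) ≤ 2 * R := by
    rw [← hg1int]
    refine integral_mono_of_nonneg ?_ hIg1 ?_
    · filter_upwards with t
      exact Set.indicator_nonneg (fun s _ => by positivity) t
    · filter_upwards with t
      simp only [hg0def, hg1def]
      by_cases ht : t ∈ Set.Icc (-R) R
      · rw [Set.indicator_of_mem ht, Set.indicator_of_mem ht]
        exact inv_le_one_of_one_le₀ (by nlinarith [sq_nonneg (a*t)])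
      · rw [Set.indicator_of_notMem ht, Set.indicator_of_notMem ht]
  have hg0le2 : (∫ t, g0 t) ≤ π * l / ‖k‖ := by
    have hpa : π / a = π * l / ‖k‖ := by rw [hadef]; field_simp
    rw [← hpa, ← aux_val_one_add_sq ha]
    refine integral_mono_of_nonneg ?_ hIa ?_
    · filter_upwards with t
      exact Set.indicator_nonneg (fun s _ => by positivity) t
    · filter_upwards with t
      exact Set.indicator_le_self' (fun s _ => by positivity) t
  have hg0min : (∫ t, g0 t) ≤ (2*R) * min 1 (π * l / ‖k‖) := by
    rcases min_cases 1 (π * l / ‖k‖) with ⟨h1, h2⟩ | ⟨h1, h2⟩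
    · rw [h1, mul_one]; exact hg0le1
    · rw [h1]
      calc (∫ t, g0 t) ≤ π * l / ‖k‖ := hg0le2
        _ ≤ 2 * R * (π * l / ‖k‖) := le_mul_of_one_le_left (by positivity) (by linarith)
  -- main chain
  calc (∫ ξ : EuclideanSpace ℝ (Fin (n+1)), ψ ξ ^ 2 / (1 + (inner ℝ ξ k : ℝ) ^ 2 / l ^ 2))
      ≤ ∫ ξ : EuclideanSpace ℝ (Fin (n+1)), M ^ 2 * ∏ i, g i (b.repr ξ i) := by
        refine integral_mono_of_nonneg ?_ (hIGE.const_mul _) ?_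
        · filter_upwards with ξ
          positivity
        · filter_upwards with ξ using hpoint ξ
    _ = M ^ 2 * ((∫ t, g0 t) * (2*R)^n) := by
        rw [integral_const_mul, hEq1, MeasureTheory.integral_fintype_prod_volume_eq_prod,
          Fin.prod_univ_succ]
        simp only [hgdef, Fin.cons_zero, Fin.cons_succ, Finset.prod_const, Finset.card_univ,
          Fintype.card_fin]
        rw [hg1int]
    _ ≤ M ^ 2 * ((2*R)^n * (2*R) * min 1 (π * l / ‖k‖)) := by
        refine mul_le_mul_of_nonneg_left ?_ (sq_nonneg M)
        calc (∫ t, g0 t) * (2*R)^n ≤ (2*R) * min 1 (π * l / ‖k‖) * (2*R)^n :=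
              mul_le_mul_of_nonneg_right hg0min (by positivity)
          _ = (2*R)^n * (2*R) * min 1 (π * l / ‖k‖) := by ring
    _ = M ^ 2 * ((2*R)^n * (2*R)) * min 1 (π * l / ‖k‖) := by ring
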